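/- Mixtures of product covariance data yield separable covariance matrices: let I be a finite index set, p : I → ℝ with p_i ≥ 0 and Σ_i p_i = 1, let N = N_A + N_B, and for each i ∈ I let γ^i_A be a 2N_A×2N_A covariance matrix, γ^i_B a 2N_B×2N_B covariance matrix, and d^i ∈ ℝ^{2N} a vector. Set d := Σ_i p_i d^i and γ := Σ_i p_i (γ^i_A ⊕ γ^i_B) + 2 Σ_i p_i d^i (d^i)ᵀ − 2 d dᵀ. Then γ − ((Σ_i p_i γ^i_A) ⊕ (Σ_i p_i γ^i_B)) is positive semidefinite; in particular γ is a separable covariance matrix with respect to the split A|B. -/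

import Mathlib

open Matrix Polynomial
open ComplexOrder

noncomputable section

/-- The standard symplectic form matrix: block diagonal with 2×2 blocks [[0,1],[-1,0]]. -/
def symplForm (n : ℕ) : Matrix (Fin n) (Fin n) ℝ :=
  Matrix.of fun i j =>
    if (i : ℕ) + 1 = (j : ℕ) ∧ (i : ℕ) % 2 = 0 then 1
    else if (j : ℕ) + 1 = (i : ℕ) ∧ (j : ℕ) % 2 = 0 then -1 else 0

/-- Membership in the real symplectic group: `S σ Sᵀ = σ`. -/
def IsSymplectic {n : ℕ} (S : Matrix (Fin n) (Fin n) ℝ) : Prop :=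
  S * symplForm n * Sᵀ = symplForm n

/-- The Williamson diagonal matrix `diag(a₁,a₁,…,a_N,a_N)`. -/
def WDiag {N : ℕ} (a : Fin N → ℝ) : Matrix (Fin (2 * N)) (Fin (2 * N)) ℝ :=
  Matrix.diagonal fun i => a ⟨(i : ℕ) / 2, by have := i.isLt; omega⟩

/-- A covariance matrix: real symmetric with `γ + iσ` positive semidefinite. -/
def IsCovMatrix {n : ℕ} (γ : Matrix (Fin n) (Fin n) ℝ) : Prop :=
  γ.IsSymm ∧
    (γ.map (Complex.ofReal) + Complex.I • (symplForm n).map Complex.ofReal).PosSemidef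

/-- The block-diagonal direct sum of two square matrices. -/
def dirSum {m n : ℕ} (A : Matrix (Fin m) (Fin m) ℝ) (B : Matrix (Fin n) (Fin n) ℝ) :
    Matrix (Fin (m + n)) (Fin (m + n)) ℝ :=
  Matrix.reindex finSumFinEquiv finSumFinEquiv (Matrix.fromBlocks A 0 0 B)

/-- Separability of a covariance matrix with respect to the split `A|B`. -/
def IsSepCov (nA nB : ℕ) (γ : Matrix (Fin (nA + nB)) (Fin (nA + nB)) ℝ) : Prop :=
  ∃ (γA : Matrix (Fin nA) (Fin nA) ℝ) (γB : Matrix (Fin nB) (Fin nB) ℝ),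
    IsCovMatrix γA ∧ IsCovMatrix γB ∧ (γ - dirSum γA γB).PosSemidef

/-! ### Auxiliary lemmas -/

open scoped MatrixOrder in
lemma aux_eq_conjTranspose_mul_self {n : ℕ} {𝕜 : Type*} [RCLike 𝕜]
    {P : Matrix (Fin n) (Fin n) 𝕜} (h : P.PosSemidef) :
    ∃ B : Matrix (Fin n) (Fin n) 𝕜, P = Bᴴ * B := by
  obtain ⟨B, hB⟩ := CStarAlgebra.nonneg_iff_eq_star_mul_self.mp h.nonneg
  exact ⟨B, hB⟩

lemma aux_map_posSemidef {n : ℕ} {P : Matrix (Fin n) (Fin n) ℝ} (h : P.PosSemidef) :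
    (P.map Complex.ofReal).PosSemidef := by
  obtain ⟨B, rfl⟩ := aux_eq_conjTranspose_mul_self h
  have : (Bᴴ * B).map ((Complex.ofReal : ℝ → ℂ)) =
      (B.map Complex.ofReal)ᴴ * (B.map Complex.ofReal) := by
    ext i j
    simp [Matrix.mul_apply, Matrix.conjTranspose_apply, Matrix.map_apply]
  rw [this]
  exact Matrix.posSemidef_conjTranspose_mul_self _

lemma aux_psd_smul {n : ℕ} {c : ℝ} (hc : 0 ≤ c) {M : Matrix (Fin n) (Fin n) ℂ}
    (h : M.PosSemidef) : ((c : ℂ) • M).PosSemidef := by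
  refine Matrix.PosSemidef.of_dotProduct_mulVec_nonneg ?_ ?_
  · rw [Matrix.IsHermitian, Matrix.conjTranspose_smul, h.1.eq]
    simp
  · intro x
    rw [Matrix.smul_mulVec, dotProduct_smul]
    exact mul_nonneg (Complex.zero_le_real.mpr hc) (h.dotProduct_mulVec_nonneg x)

lemma aux_psd_sum {n : ℕ} {I : Type} [Fintype I] (f : I → Matrix (Fin n) (Fin n) ℂ)
    (h : ∀ i, (f i).PosSemidef) : (∑ i, f i).PosSemidef :=
  Finset.sum_induction f _ (fun _ _ ha hb => ha.add hb) Matrix.PosSemidef.zero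
    (fun i _ => h i)

lemma aux_psd_fromBlocks {m n : ℕ} {A : Matrix (Fin m) (Fin m) ℂ}
    {B : Matrix (Fin n) (Fin n) ℂ} (hA : A.PosSemidef) (hB : B.PosSemidef) :
    (Matrix.fromBlocks A 0 0 B).PosSemidef := by
  obtain ⟨A', rfl⟩ := aux_eq_conjTranspose_mul_self hA
  obtain ⟨B', rfl⟩ := aux_eq_conjTranspose_mul_self hB
  have : Matrix.fromBlocks (A'ᴴ * A') 0 0 (B'ᴴ * B') =
      (Matrix.fromBlocks A' 0 0 B')ᴴ * (Matrix.fromBlocks A' 0 0 B') := by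
    rw [Matrix.fromBlocks_conjTranspose, Matrix.fromBlocks_multiply]
    simp
  rw [this]
  exact Matrix.posSemidef_conjTranspose_mul_self _

lemma aux_dirSum_sum {m n : ℕ} {I : Type} [Fintype I] (p : I → ℝ)
    (f : I → Matrix (Fin m) (Fin m) ℝ) (g : I → Matrix (Fin n) (Fin n) ℝ) :
    dirSum (∑ i, p i • f i) (∑ i, p i • g i) = ∑ i, p i • dirSum (f i) (g i) := by
  ext i j
  simp only [dirSum, Matrix.reindex_apply, Matrix.submatrix_apply, Matrix.sum_apply,
    Matrix.smul_apply, smul_eq_mul]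
  rcases hi : finSumFinEquiv.symm i with a | a <;> rcases hj : finSumFinEquiv.symm j with b | b <;>
    simp [Matrix.fromBlocks, Matrix.sum_apply]

lemma aux_symplForm_split (m n : ℕ) (hm : m % 2 = 0) :
    symplForm (m + n) = dirSum (symplForm m) (symplForm n) := by
  ext i j
  simp only [dirSum, Matrix.reindex_apply, Matrix.submatrix_apply]
  induction i using Fin.addCases with
  | left i =>
    induction j using Fin.addCases with
    | left j =>
      simp only [finSumFinEquiv_symm_apply_castAdd, Matrix.fromBlocks_apply₁₁,
        symplForm, Matrix.of_apply, Fin.coe_castAdd]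
    | right j =>
      have h1 := i.isLt
      simp only [finSumFinEquiv_symm_apply_castAdd, finSumFinEquiv_symm_apply_natAdd,
        Matrix.fromBlocks_apply₁₂, symplForm, Matrix.of_apply, Fin.coe_castAdd,
        Fin.coe_natAdd, Matrix.zero_apply]
      split_ifs <;> first | rfl | omega
  | right i =>
    induction j using Fin.addCases with
    | left j =>
      have h1 := j.isLt
      simp only [finSumFinEquiv_symm_apply_castAdd, finSumFinEquiv_symm_apply_natAdd,
        Matrix.fromBlocks_apply₂₁, symplForm, Matrix.of_apply, Fin.coe_castAdd,
        Fin.coe_natAdd, Matrix.zero_apply]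
      split_ifs <;> first | rfl | omega
    | right j =>
      simp only [finSumFinEquiv_symm_apply_natAdd, Matrix.fromBlocks_apply₂₂,
        symplForm, Matrix.of_apply, Fin.coe_natAdd]
      split_ifs <;> first | rfl | omega

lemma aux_sum_mulVec {n : ℕ} {I : Type} [Fintype I] (f : I → Matrix (Fin n) (Fin n) ℝ)
    (x : Fin n → ℝ) : (∑ i, f i) *ᵥ x = ∑ i, f i *ᵥ x := by
  ext j
  simp only [Matrix.mulVec, dotProduct, Matrix.sum_apply, Finset.sum_apply,
    Finset.sum_mul]
  exact Finset.sum_comm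

lemma aux_dot_sum_vec {n : ℕ} {I : Type} [Fintype I] (x : Fin n → ℝ) (w : I → Fin n → ℝ) :
    x ⬝ᵥ (∑ i, w i) = ∑ i, x ⬝ᵥ w i := by
  simp only [dotProduct, Finset.sum_apply, Finset.mul_sum]
  exact Finset.sum_comm

lemma aux_sum_dot {n : ℕ} {I : Type} [Fintype I] (p : I → ℝ) (d : I → Fin n → ℝ)
    (x : Fin n → ℝ) : (∑ i, p i • d i) ⬝ᵥ x = ∑ i, p i * (d i ⬝ᵥ x) := by
  simp only [dotProduct, Finset.sum_apply, Finset.sum_mul, Pi.smul_apply,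
    smul_eq_mul, Finset.mul_sum]
  rw [Finset.sum_comm]
  exact Finset.sum_congr rfl fun i _ => Finset.sum_congr rfl fun j _ => by ring

lemma aux_mix_psd {n : ℕ} {I : Type} [Fintype I] (p : I → ℝ) (hp : ∀ i, 0 ≤ p i)
    (hsum : ∑ i, p i = 1) (d : I → Fin n → ℝ) :
    ((∑ i, p i • Matrix.vecMulVec (d i) (d i)) -
      Matrix.vecMulVec (∑ i, p i • d i) (∑ i, p i • d i)).PosSemidef := by
  refine Matrix.PosSemidef.of_dotProduct_mulVec_nonneg ?_ ?_
  · show _ = _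
    ext i j
    simp only [Matrix.conjTranspose_apply, Matrix.sub_apply, Matrix.sum_apply,
      Matrix.smul_apply, Matrix.vecMulVec_apply, smul_eq_mul, star_trivial,
      Finset.sum_apply, Pi.smul_apply]
    congr 1
    · exact Finset.sum_congr rfl fun k _ => by ring
    · ring
  · intro x
    have key : ∀ (v : Fin n → ℝ), star x ⬝ᵥ (Matrix.vecMulVec v v) *ᵥ x = (v ⬝ᵥ x) ^ 2 := by
      intro v
      simp only [star_trivial, dotProduct, Matrix.mulVec, Matrix.vecMulVec_apply]
      rw [sq, Finset.sum_mul_sum]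
      exact Finset.sum_congr rfl fun i _ => by
        rw [Finset.mul_sum]
        exact Finset.sum_congr rfl fun j _ => by ring
    have expand : star x ⬝ᵥ ((∑ i, p i • Matrix.vecMulVec (d i) (d i)) -
        Matrix.vecMulVec (∑ i, p i • d i) (∑ i, p i • d i)) *ᵥ x =
        (∑ i, p i * (d i ⬝ᵥ x) ^ 2) - (∑ i, p i * (d i ⬝ᵥ x)) ^ 2 := by
      rw [Matrix.sub_mulVec, dotProduct_sub]
      congr 1
      · rw [aux_sum_mulVec, star_trivial, aux_dot_sum_vec]
        refine Finset.sum_congr rfl fun i _ => ?_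
        rw [Matrix.smul_mulVec, dotProduct_smul, smul_eq_mul, ← key (d i),
          star_trivial]
      · rw [key, aux_sum_dot]
    rw [expand, sub_nonneg]
    calc (∑ i, p i * (d i ⬝ᵥ x)) ^ 2
        = (∑ i, Real.sqrt (p i) * (Real.sqrt (p i) * (d i ⬝ᵥ x))) ^ 2 := by
          refine congrArg (· ^ 2) (Finset.sum_congr rfl fun i _ => ?_)
          rw [← mul_assoc, Real.mul_self_sqrt (hp i)]
      _ ≤ (∑ i, Real.sqrt (p i) ^ 2) * ∑ i, (Real.sqrt (p i) * (d i ⬝ᵥ x)) ^ 2 :=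
          Finset.sum_mul_sq_le_sq_mul_sq _ _ _
      _ = ∑ i, p i * (d i ⬝ᵥ x) ^ 2 := by
          rw [show (∑ i, Real.sqrt (p i) ^ 2) = 1 by
            rw [← hsum]; exact Finset.sum_congr rfl fun i _ => Real.sq_sqrt (hp i), one_mul]
          exact Finset.sum_congr rfl fun i _ => by rw [mul_pow, Real.sq_sqrt (hp i)]

lemma aux_cov_sum {n : ℕ} {I : Type} [Fintype I] (p : I → ℝ) (hp : ∀ i, 0 ≤ p i)
    (hsum : ∑ i, p i = 1) (γ : I → Matrix (Fin n) (Fin n) ℝ)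
    (h : ∀ i, IsCovMatrix (γ i)) : IsCovMatrix (∑ i, p i • γ i) := by
  constructor
  · refine Matrix.IsSymm.ext fun i j => ?_
    simp only [Matrix.sum_apply, Matrix.smul_apply, smul_eq_mul]
    exact Finset.sum_congr rfl fun k _ => by rw [(h k).1.apply]
  · have heq : (∑ i, p i • γ i).map Complex.ofReal +
        Complex.I • (symplForm n).map Complex.ofReal =
        ∑ i, (p i : ℂ) • ((γ i).map Complex.ofReal +
          Complex.I • (symplForm n).map Complex.ofReal) := by
      simp only [smul_add, Finset.sum_add_distrib, ← Finset.sum_smul]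
      congr 1
      · ext i j
        simp [Matrix.map_apply, Matrix.sum_apply, Matrix.smul_apply]
      · rw [show (∑ i, (p i : ℂ)) = 1 by exact_mod_cast hsum, one_smul]
    rw [heq]
    exact aux_psd_sum _ fun i => aux_psd_smul (hp i) (h i).2

lemma aux_cov_dirSum {m n : ℕ} (hm : m % 2 = 0)
    {A : Matrix (Fin m) (Fin m) ℝ} {B : Matrix (Fin n) (Fin n) ℝ}
    (hA : IsCovMatrix A) (hB : IsCovMatrix B) : IsCovMatrix (dirSum A B) := by
  constructor
  · exact ((Matrix.IsSymm.fromBlocks hA.1 (by simp) hB.1 : (Matrix.fromBlocks A 0 0 B).IsSymm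
      )).submatrix _
  · have : (dirSum A B).map Complex.ofReal +
        Complex.I • (symplForm (m + n)).map Complex.ofReal =
        Matrix.reindex finSumFinEquiv finSumFinEquiv
          (Matrix.fromBlocks
            (A.map Complex.ofReal + Complex.I • (symplForm m).map Complex.ofReal) 0 0
            (B.map Complex.ofReal + Complex.I • (symplForm n).map Complex.ofReal)) := by
      rw [aux_symplForm_split m n hm]
      ext i j
      rcases hi : finSumFinEquiv.symm i with a | a <;>
        rcases hj : finSumFinEquiv.symm j with b | b <;>
          simp [dirSum, Matrix.reindex_apply, Matrix.submatrix_apply, hi, hj,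
            Matrix.fromBlocks, Matrix.map_apply]
    rw [this, Matrix.reindex_apply]
    exact ((Matrix.posSemidef_submatrix_equiv finSumFinEquiv.symm).mpr
      (aux_psd_fromBlocks hA.2 hB.2))

lemma aux_cov_add_psd {n : ℕ} {γ P : Matrix (Fin n) (Fin n) ℝ}
    (hγ : IsCovMatrix γ) (hP : P.PosSemidef) : IsCovMatrix (γ + P) := by
  constructor
  · refine hγ.1.add ?_
    show Pᵀ = P
    rw [← Matrix.conjTranspose_eq_transpose_of_trivial]
    exact hP.isHermitian
  · have : (γ + P).map Complex.ofReal + Complex.I • (symplForm n).map Complex.ofReal =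
        (γ.map Complex.ofReal + Complex.I • (symplForm n).map Complex.ofReal) +
          P.map Complex.ofReal := by
      ext i j
      simp [Matrix.map_apply, Matrix.add_apply]
      ring
    rw [this]
    exact hγ.2.add (aux_map_posSemidef hP)

/-- Mixtures of product covariance data yield separable covariance matrices. -/
theorem mixture_of_products_is_separable (NA NB : ℕ) (hNA : 1 ≤ NA) (hNB : 1 ≤ NB)
    {I : Type} [Fintype I] (p : I → ℝ) (hp : ∀ i, 0 ≤ p i) (hsum : ∑ i, p i = 1)
    (γA : I → Matrix (Fin (2 * NA)) (Fin (2 * NA)) ℝ)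
    (γB : I → Matrix (Fin (2 * NB)) (Fin (2 * NB)) ℝ)
    (hγA : ∀ i, IsCovMatrix (γA i)) (hγB : ∀ i, IsCovMatrix (γB i))
    (d : I → (Fin (2 * NA + 2 * NB) → ℝ))
    (γ : Matrix (Fin (2 * NA + 2 * NB)) (Fin (2 * NA + 2 * NB)) ℝ)
    (hγ : γ = (∑ i, p i • dirSum (γA i) (γB i)) +
        (2 : ℝ) • (∑ i, p i • Matrix.vecMulVec (d i) (d i)) -
        (2 : ℝ) • Matrix.vecMulVec (∑ i, p i • d i) (∑ i, p i • d i)) :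
    (γ - dirSum (∑ i, p i • γA i) (∑ i, p i • γB i)).PosSemidef ∧
      IsCovMatrix γ ∧ IsSepCov (2 * NA) (2 * NB) γ := by
  set X := ∑ i, p i • Matrix.vecMulVec (d i) (d i) with hX
  set Y := Matrix.vecMulVec (∑ i, p i • d i) (∑ i, p i • d i) with hY
  have hMpsd : (X - Y).PosSemidef := aux_mix_psd p hp hsum d
  have hdiff : γ - dirSum (∑ i, p i • γA i) (∑ i, p i • γB i) = (X - Y) + (X - Y) := by
    rw [hγ, aux_dirSum_sum p γA γB]
    have h2 : (2 : ℝ) • X - (2 : ℝ) • Y = (X - Y) + (X - Y) := by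
      rw [← smul_sub, two_smul]
    rw [add_sub_assoc, h2]
    abel
  have hpsd : (γ - dirSum (∑ i, p i • γA i) (∑ i, p i • γB i)).PosSemidef := by
    rw [hdiff]; exact hMpsd.add hMpsd
  have hcovA : IsCovMatrix (∑ i, p i • γA i) := aux_cov_sum p hp hsum γA hγA
  have hcovB : IsCovMatrix (∑ i, p i • γB i) := aux_cov_sum p hp hsum γB hγB
  have hcovD : IsCovMatrix (dirSum (∑ i, p i • γA i) (∑ i, p i • γB i)) :=
    aux_cov_dirSum (by omega) hcovA hcovB
  have hγeq : γ = dirSum (∑ i, p i • γA i) (∑ i, p i • γB i) + ((X - Y) + (X - Y)) := by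
    have := sub_eq_iff_eq_add.mp hdiff
    rw [this]; abel
  have hcovγ : IsCovMatrix γ := by
    rw [hγeq]
    exact aux_cov_add_psd hcovD (hMpsd.add hMpsd)
  exact ⟨hpsd, hcovγ, ⟨_, _, hcovA, hcovB, hpsd⟩⟩
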